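/- Let k be a number field of degree n = [k:ℚ] and let f be a nonzero element of its ring of integers 𝒪_k. Then ∑_{v real} |f|_v² + 2·∑_{v complex} |f|_v² = n if and only if f is a root of unity, i.e. f^m = 1 for some integer m ≥ 1. -/

import Mathlib

open NumberField Finset
open scoped Classical

theorem sum_place_sq_eq_degree_iff_rootOfUnity (k : Type*) [Field k] [NumberField k]
    (f : 𝓞 k) (hf : f ≠ 0) :
    (∑ v : InfinitePlace k,
        if v.IsReal then (v (f : k)) ^ 2 else 2 * (v (f : k)) ^ 2)
      = (Module.finrank ℚ k : ℝ) ↔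
    ∃ m : ℕ, 1 ≤ m ∧ f ^ m = 1 := by
  have hfk : (f : k) ≠ 0 := by
    simpa using hf
  have hvpos : ∀ v : InfinitePlace k, 0 < v (f : k) := fun v =>
    InfinitePlace.pos_iff.mpr hfk
  -- rewrite summand using mult
  have hsummand : ∀ v : InfinitePlace k,
      (if v.IsReal then (v (f : k)) ^ 2 else 2 * (v (f : k)) ^ 2)
        = (v.mult : ℝ) * (v (f : k)) ^ 2 := by
    intro v
    rw [InfinitePlace.mult]
    split_ifs <;> push_cast <;> ring
  have hmultsum : ∑ v : InfinitePlace k, (v.mult : ℝ) = (Module.finrank ℚ k : ℝ) := by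
    rw [← Nat.cast_sum]
    exact_mod_cast congrArg (Nat.cast (R := ℝ)) (InfinitePlace.sum_mult_eq (K := k))
  constructor
  · intro hsum
    rw [Finset.sum_congr rfl (fun v _ => hsummand v)] at hsum
    -- the product over places is ≥ 1
    have hnorm : (1 : ℝ) ≤ ∏ v : InfinitePlace k, (v (f : k)) ^ v.mult := by
      rw [InfinitePlace.prod_eq_abs_norm]
      rw [← Algebra.coe_norm_int, ← Int.cast_one, ← Int.cast_abs, Rat.cast_intCast, Int.cast_le]
      exact Int.one_le_abs (Algebra.norm_ne_zero_iff.mpr hf)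
    have hlogprod : (0 : ℝ) ≤ ∑ v : InfinitePlace k, (v.mult : ℝ) * Real.log ((v (f : k)) ^ 2) :=
      by
      have hlog := Real.log_le_log (by norm_num) hnorm
      rw [Real.log_one, Real.log_prod (fun v _ => (pow_pos (hvpos v) _).ne')] at hlog
      have h2 : ∑ v : InfinitePlace k, (v.mult : ℝ) * Real.log ((v (f : k)) ^ 2)
          = 2 * ∑ v : InfinitePlace k, Real.log ((v (f : k)) ^ v.mult) := by
        rw [Finset.mul_sum]
        refine Finset.sum_congr rfl (fun v _ => ?_)
        rw [Real.log_pow, Real.log_pow]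
        push_cast
        ring
      rw [h2]
      linarith
    -- each term of the "a - 1 - log a" sum is nonneg, but the sum is ≤ 0
    set g : InfinitePlace k → ℝ := fun v =>
      (v.mult : ℝ) * ((v (f : k)) ^ 2 - 1 - Real.log ((v (f : k)) ^ 2)) with hg
    have hgnonneg : ∀ v ∈ Finset.univ, 0 ≤ g v := by
      intro v _
      have h1 : Real.log ((v (f : k)) ^ 2) ≤ (v (f : k)) ^ 2 - 1 :=
        Real.log_le_sub_one_of_pos (pow_pos (hvpos v) 2)
      have h2 : (0 : ℝ) ≤ (v.mult : ℝ) := by positivity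
      show (0 : ℝ) ≤ (v.mult : ℝ) * ((v (f : k)) ^ 2 - 1 - Real.log ((v (f : k)) ^ 2))
      exact mul_nonneg h2 (by linarith)
    have hsumg : ∑ v : InfinitePlace k, g v ≤ 0 := by
      have : ∑ v : InfinitePlace k, g v
          = (∑ v : InfinitePlace k, (v.mult : ℝ) * (v (f : k)) ^ 2)
            - (∑ v : InfinitePlace k, (v.mult : ℝ))
            - ∑ v : InfinitePlace k, (v.mult : ℝ) * Real.log ((v (f : k)) ^ 2) := by
        rw [← Finset.sum_sub_distrib, ← Finset.sum_sub_distrib]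
        exact Finset.sum_congr rfl (fun v _ => by rw [hg]; ring)
      rw [this, hsum, hmultsum]
      linarith
    have hgzero : ∀ v ∈ Finset.univ, g v = 0 := by
      have := (Finset.sum_eq_zero_iff_of_nonneg hgnonneg).mp
        (le_antisymm hsumg (Finset.sum_nonneg hgnonneg))
      exact this
    have hone : ∀ v : InfinitePlace k, v (f : k) = 1 := by
      intro v
      have hz := hgzero v (Finset.mem_univ v)
      rw [hg] at hz
      have hm : (0 : ℝ) < (v.mult : ℝ) := by
        exact_mod_cast v.mult_pos
      have heq : (v (f : k)) ^ 2 - 1 - Real.log ((v (f : k)) ^ 2) = 0 := by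
        rcases mul_eq_zero.mp hz with h | h
        · exact absurd h hm.ne'
        · exact h
      have ha : (v (f : k)) ^ 2 = 1 := by
        by_contra hne
        have := Real.log_lt_sub_one_of_pos (x := (v (f : k)) ^ 2) (pow_pos (hvpos v) 2) hne
        linarith
      nlinarith [hvpos v]
    have hx : ∀ φ : k →+* ℂ, ‖φ (f : k)‖ = 1 := by
      intro φ
      have := hone (InfinitePlace.mk φ)
      rwa [InfinitePlace.apply] at this
    obtain ⟨m, hm, hpow⟩ :=
      NumberField.Embeddings.pow_eq_one_of_norm_eq_one k ℂ f.isIntegral_coe hx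
    refine ⟨m, hm, ?_⟩
    apply NumberField.RingOfIntegers.coe_injective
    push_cast
    exact hpow
  · rintro ⟨m, hm, hfm⟩
    have hone : ∀ v : InfinitePlace k, v (f : k) = 1 := by
      intro v
      have hck : ((f : k)) ^ m = 1 := by
        have := congrArg (algebraMap (𝓞 k) k) hfm
        simpa using this
      have h1 : (v (f : k)) ^ m = 1 := by rw [← map_pow, hck, map_one]
      have hm0 : m ≠ 0 := Nat.one_le_iff_ne_zero.mp hm
      rcases lt_trichotomy (v (f : k)) 1 with h | h | h
      · exact absurd h1 (ne_of_lt (pow_lt_one₀ (hvpos v).le h hm0))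
      · exact h
      · exact absurd h1 (ne_of_gt (one_lt_pow₀ h hm0))
    rw [Finset.sum_congr rfl (fun v _ => hsummand v)]
    simp_rw [hone, one_pow, mul_one]
    exact hmultsum
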